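/- Given nonnegative integers j,i,j',i',j'',i'' satisfying i'-j = i''-j' = i-j'', the quantity u(j,i,j',i',j'',i'') is invariant under the natural action of the dihedral group D_6 on the 6-tuple (j,i,j',i',j'',i''), i.e., under the cyclic shift (j,i,j',i',j'',i'') \mapsto (j',i',j'',i'',j,i) and under the reflection (j,i,j',i',j'',i'') \mapsto (j'',i',j',i,j,i''). -/

import Mathlib

open scoped BigOperators
open Finset

/-- The indeterminate `t`, as a rational function over `ℚ`. -/
noncomputable def t : RatFunc ℚ := RatFunc.X

/-- `α m = ∏_{s=1}^m (1 - t^s)`. -/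
noncomputable def al (m : ℕ) : RatFunc ℚ := ∏ s ∈ Finset.range m, (1 - t ^ (s + 1))

/-- The q-Pochhammer symbol `(x;t)_n = ∏_{r=0}^{n-1} (1 - x t^r)`. -/
noncomputable def poch (x : RatFunc ℚ) (n : ℕ) : RatFunc ℚ :=
  ∏ r ∈ Finset.range n, (1 - x * t ^ r)

lemma t_ne_zero : t ≠ 0 := RatFunc.X_ne_zero

lemma t_pow_ne_one (s : ℕ) (hs : s ≠ 0) : t ^ s ≠ 1 := by
  intro h
  have h2 : (algebraMap (Polynomial ℚ) (RatFunc ℚ)) (Polynomial.X ^ s) =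
      (algebraMap (Polynomial ℚ) (RatFunc ℚ)) 1 := by
    simpa [map_pow, RatFunc.algebraMap_X, t] using h
  have := RatFunc.algebraMap_injective ℚ h2
  have h0 := congrArg (Polynomial.eval 0) this
  simp [hs] at h0

lemma one_sub_t_pow_ne_zero (s : ℕ) (hs : s ≠ 0) : (1 : RatFunc ℚ) - t ^ s ≠ 0 := by
  intro h
  exact t_pow_ne_one s hs (by linear_combination -h)

lemma al_ne_zero (m : ℕ) : al m ≠ 0 := by
  refine Finset.prod_ne_zero_iff.mpr fun s _ => ?_
  have := one_sub_t_pow_ne_zero (s + 1) (Nat.succ_ne_zero s)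
  exact this

lemma al_succ (m : ℕ) : al (m + 1) = al m * (1 - t ^ (m + 1)) := by
  simp [al, Finset.prod_range_succ]

noncomputable def ial (m : ℤ) : RatFunc ℚ := if 0 ≤ m then (al m.toNat)⁻¹ else 0

lemma ial_natCast (n : ℕ) : ial (n : ℤ) = (al n)⁻¹ := by simp [ial]

lemma ial_neg {m : ℤ} (h : m < 0) : ial m = 0 := by simp [ial, not_le.mpr h]

lemma ial_zero : ial 0 = 1 := by simp [ial, al]

lemma al_mul_ial (n : ℕ) : al n * ial (n : ℤ) = 1 := by
  rw [ial_natCast]; exact mul_inv_cancel₀ (al_ne_zero n)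

lemma ial_sub_natCast (a l : ℕ) (h : l ≤ a) : ial ((a : ℤ) - l) = (al (a - l))⁻¹ := by
  rw [show ((a : ℤ) - l) = ((a - l : ℕ) : ℤ) by omega, ial_natCast]

lemma poch_t (n : ℕ) : poch t n = al n := by
  unfold poch al
  exact Finset.prod_congr rfl fun r _ => by rw [← pow_succ']

noncomputable def Q (k n : ℕ) : RatFunc ℚ := al k * ial (n : ℤ) * ial ((k : ℤ) - n)

lemma ial_eq_inv_al {z : ℤ} (c : ℕ) (h : z = (c : ℤ)) : ial z = (al c)⁻¹ := by
  rw [h, ial_natCast]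

lemma Q_zero_right (k : ℕ) : Q k 0 = 1 := by
  simp [Q, ial_zero, ial_natCast, mul_inv_cancel₀ (al_ne_zero k)]

lemma Q_eq_zero_of_lt {k n : ℕ} (h : k < n) : Q k n = 0 := by
  simp [Q, ial_neg (by omega : (k : ℤ) - n < 0)]

lemma Q_self (k : ℕ) : Q k k = 1 := by
  simp [Q, ial_natCast, sub_self, ial_zero, mul_inv_cancel₀ (al_ne_zero k)]

lemma Q_pascal (k n : ℕ) : Q (k + 1) (n + 1) = Q k (n + 1) + t ^ (k - n) * Q k n := by
  rcases lt_or_ge k n with h | h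
  · rw [Q_eq_zero_of_lt (show k + 1 < n + 1 by omega), Q_eq_zero_of_lt (show k < n + 1 by omega),
      Q_eq_zero_of_lt h]
    ring
  · obtain ⟨d, rfl⟩ := Nat.exists_eq_add_of_le h
    rcases Nat.eq_zero_or_pos d with rfl | hd
    · rw [Q_eq_zero_of_lt (show n + 0 < n + 1 by omega)]
      simp only [Nat.add_zero, Nat.sub_self, pow_zero]
      rw [Q_self, Q_self]
      ring
    · obtain ⟨e, rfl⟩ : ∃ e, d = e + 1 := ⟨d - 1, by omega⟩
      simp only [Q]
      rw [ial_eq_inv_al (e + 1) (show ((n + (e + 1) + 1 : ℕ) : ℤ) - ((n + 1 : ℕ) : ℤ)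
            = ((e + 1 : ℕ) : ℤ) by push_cast; ring),
        ial_eq_inv_al e (show ((n + (e + 1) : ℕ) : ℤ) - ((n + 1 : ℕ) : ℤ)
            = ((e : ℕ) : ℤ) by push_cast; ring),
        ial_eq_inv_al (e + 1) (show ((n + (e + 1) : ℕ) : ℤ) - ((n : ℕ) : ℤ)
            = ((e + 1 : ℕ) : ℤ) by push_cast; ring)]
      simp only [ial_natCast]
      rw [show n + (e + 1) + 1 = (n + e + 1) + 1 by ring, al_succ (n + e + 1),
        show n + (e + 1) = (n + e) + 1 by ring, al_succ (n + e),
        al_succ e, al_succ n, show n + e + 1 - n = e + 1 by omega]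
      have h1 : (1 : RatFunc ℚ) - t ^ (n + 1) ≠ 0 := one_sub_t_pow_ne_zero _ (by omega)
      have h2 : (1 : RatFunc ℚ) - t ^ (e + 1) ≠ 0 := one_sub_t_pow_ne_zero _ (by omega)
      have h3 := al_ne_zero (n + e)
      have h4 := al_ne_zero e
      have h5 := al_ne_zero n
      field_simp
      ring_nf

def cc : ℕ → ℕ
  | 0 => 0
  | n + 1 => cc n + n

lemma poch_succ (y : RatFunc ℚ) (k : ℕ) : poch y (k + 1) = poch y k * (1 - y * t ^ k) := by
  simp [poch, Finset.prod_range_succ]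

lemma QBT (y : RatFunc ℚ) (k : ℕ) :
    poch y k = ∑ n ∈ range (k + 1), (-1 : RatFunc ℚ) ^ n * t ^ (cc n) * Q k n * y ^ n := by
  induction k with
  | zero => simp [poch, Q_zero_right, cc]
  | succ k ih =>
    rw [poch_succ, ih,
      Finset.sum_range_succ' (fun n => (-1 : RatFunc ℚ) ^ n * t ^ (cc n) * Q (k + 1) n * y ^ n)
        (k + 1)]
    have hsplit : ∀ n ∈ range (k + 1),
        (-1 : RatFunc ℚ) ^ (n + 1) * t ^ (cc (n + 1)) * Q (k + 1) (n + 1) * y ^ (n + 1)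
          = (-1 : RatFunc ℚ) ^ (n + 1) * t ^ (cc (n + 1)) * Q k (n + 1) * y ^ (n + 1)
            + (-(y * t ^ k)) * ((-1 : RatFunc ℚ) ^ n * t ^ (cc n) * Q k n * y ^ n) := by
      intro n hn
      have hmem : n ≤ k := by have := mem_range.mp hn; omega
      have hexp : t ^ (cc (n + 1)) * t ^ (k - n) = t ^ (cc n) * t ^ k := by
        rw [← pow_add, ← pow_add]
        congr 1
        show cc n + n + (k - n) = cc n + k
        omega
      rw [Q_pascal, pow_succ (-1 : RatFunc ℚ) n, pow_succ y n]
      linear_combination (-(-1 : RatFunc ℚ) ^ n * Q k n * y ^ n * y) * hexp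
    rw [Finset.sum_congr rfl hsplit, Finset.sum_add_distrib]
    have h1 : (∑ n ∈ range (k + 1),
        (-1 : RatFunc ℚ) ^ (n + 1) * t ^ (cc (n + 1)) * Q k (n + 1) * y ^ (n + 1))
          + (-1 : RatFunc ℚ) ^ 0 * t ^ (cc 0) * Q (k + 1) 0 * y ^ 0
        = ∑ n ∈ range (k + 1), (-1 : RatFunc ℚ) ^ n * t ^ (cc n) * Q k n * y ^ n := by
      have h0 : (-1 : RatFunc ℚ) ^ 0 * t ^ (cc 0) * Q (k + 1) 0 * y ^ 0
          = (-1 : RatFunc ℚ) ^ 0 * t ^ (cc 0) * Q k 0 * y ^ 0 := by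
        rw [Q_zero_right, Q_zero_right]
      rw [h0, ← Finset.sum_range_succ'
        (fun n => (-1 : RatFunc ℚ) ^ n * t ^ (cc n) * Q k n * y ^ n) (k + 1),
        Finset.sum_range_succ]
      rw [Q_eq_zero_of_lt (show k < k + 1 by omega)]
      ring
    have h2 : (∑ n ∈ range (k + 1),
        (-(y * t ^ k)) * ((-1 : RatFunc ℚ) ^ n * t ^ (cc n) * Q k n * y ^ n))
        = (-(y * t ^ k)) * ∑ n ∈ range (k + 1), (-1 : RatFunc ℚ) ^ n * t ^ (cc n) * Q k n * y ^ n :=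
      (Finset.mul_sum _ _ _).symm
    rw [add_right_comm, h1, h2]
    ring

lemma Q_compl (b C : ℕ) : Q (b + C) b = Q (b + C) C := by
  unfold Q
  rw [ial_eq_inv_al C (show ((b + C : ℕ) : ℤ) - (b : ℕ) = ((C : ℕ) : ℤ) by push_cast; ring),
    ial_eq_inv_al b (show ((b + C : ℕ) : ℤ) - (C : ℕ) = ((b : ℕ) : ℤ) by push_cast; ring),
    ial_natCast, ial_natCast]
  ring

lemma VDM : ∀ a b C : ℕ, Q (a + b + C) b
    = ∑ l ∈ range (b + 1), t ^ (l * (l + C)) * Q a l * Q (b + C) (l + C) := by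
  intro a
  induction a with
  | zero =>
    intro b C
    rw [Finset.sum_eq_single 0]
    · simp only [Nat.zero_mul, pow_zero, Q_zero_right, Nat.zero_add, one_mul]
      exact Q_compl b C
    · intro l _ hl
      rw [Q_eq_zero_of_lt (show 0 < l by omega)]
      ring
    · intro h
      exact absurd (mem_range.mpr (by omega)) h
  | succ a ih =>
    intro b C
    rcases b with _ | b'
    · simp only [Nat.zero_add, Finset.sum_range_one, Nat.zero_mul, pow_zero, Q_zero_right,
        one_mul, Q_self]
    · rw [Finset.sum_range_succ'
        (fun l => t ^ (l * (l + C)) * Q (a + 1) l * Q (b' + 1 + C) (l + C)) (b' + 1)]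
      have hsplit : ∀ m ∈ range (b' + 1),
          t ^ ((m + 1) * ((m + 1) + C)) * Q (a + 1) (m + 1) * Q (b' + 1 + C) ((m + 1) + C)
            = t ^ ((m + 1) * ((m + 1) + C)) * Q a (m + 1) * Q (b' + 1 + C) ((m + 1) + C)
              + t ^ (a + C + 1) *
                (t ^ (m * (m + (C + 1))) * Q a m * Q (b' + (C + 1)) (m + (C + 1))) := by
        intro m _
        have hQ : Q (b' + (C + 1)) (m + (C + 1)) = Q (b' + 1 + C) ((m + 1) + C) := by
          rw [show b' + (C + 1) = b' + 1 + C by ring, show m + (C + 1) = (m + 1) + C by ring]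
        rw [Q_pascal a m, hQ]
        by_cases hma : m ≤ a
        · obtain ⟨d, rfl⟩ := Nat.exists_eq_add_of_le hma
          rw [show m + d - m = d by omega]
          have e1 : t ^ ((m + 1) * ((m + 1) + C)) * t ^ d
              = t ^ ((m + d) + C + 1) * t ^ (m * (m + (C + 1))) := by
            rw [← pow_add, ← pow_add]
            congr 1
            ring
          linear_combination (Q (m + d) m * Q (b' + 1 + C) ((m + 1) + C)) * e1
        · rw [Q_eq_zero_of_lt (show a < m by omega)]
          ring
      rw [Finset.sum_congr rfl hsplit, Finset.sum_add_distrib]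
      have h1 : (∑ m ∈ range (b' + 1),
            t ^ ((m + 1) * ((m + 1) + C)) * Q a (m + 1) * Q (b' + 1 + C) ((m + 1) + C))
            + t ^ (0 * (0 + C)) * Q (a + 1) 0 * Q (b' + 1 + C) (0 + C)
          = Q (a + (b' + 1) + C) (b' + 1) := by
        have h0 : t ^ (0 * (0 + C)) * Q (a + 1) 0 * Q (b' + 1 + C) (0 + C)
            = t ^ (0 * (0 + C)) * Q a 0 * Q (b' + 1 + C) (0 + C) := by
          rw [Q_zero_right, Q_zero_right]
        rw [h0, ← Finset.sum_range_succ'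
          (fun l => t ^ (l * (l + C)) * Q a l * Q (b' + 1 + C) (l + C)) (b' + 1)]
        exact (ih (b' + 1) C).symm
      have h2 : (∑ m ∈ range (b' + 1), t ^ (a + C + 1) *
            (t ^ (m * (m + (C + 1))) * Q a m * Q (b' + (C + 1)) (m + (C + 1))))
          = t ^ (a + C + 1) * Q (a + b' + (C + 1)) b' := by
        rw [← Finset.mul_sum, ← ih b' (C + 1)]
      have hP := Q_pascal (a + (b' + 1) + C) b'
      rw [show a + (b' + 1) + C - b' = a + C + 1 by omega] at hP
      rw [show a + b' + (C + 1) = a + (b' + 1) + C by ring] at h2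
      rw [show a + 1 + (b' + 1) + C = a + (b' + 1) + C + 1 by ring, hP]
      linear_combination -h1 - h2

lemma VDMinv (a b C N : ℕ) (hN : min a b < N) :
    al (a + b + C) * ial (a : ℤ) * ial (b : ℤ) * ial ((a + C : ℕ) : ℤ) * ial ((b + C : ℕ) : ℤ)
      = ∑ l ∈ range N, t ^ (l * (l + C)) * ial (l : ℤ) * ial ((l + C : ℕ) : ℤ)
          * ial ((a : ℤ) - l) * ial ((b : ℤ) - l) := by
  have hsub : range (min a b + 1) ⊆ range N := Finset.range_subset_range.mpr (by omega)
  have hz : ∀ x ∈ range N, x ∉ range (min a b + 1) →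
      t ^ (x * (x + C)) * ial (x : ℤ) * ial ((x + C : ℕ) : ℤ)
        * ial ((a : ℤ) - x) * ial ((b : ℤ) - x) = 0 := by
    intro x _ hx
    have hx' : min a b < x := by
      by_contra h
      exact hx (mem_range.mpr (by omega))
    rcases le_or_gt x a with h1 | h1
    · rw [ial_neg (show (b : ℤ) - x < 0 by omega)]
      ring
    · rw [ial_neg (show (a : ℤ) - x < 0 by omega)]
      ring
  rw [← Finset.sum_subset hsub hz]
  have hV := VDM a b C
  have hsub2 : range (min a b + 1) ⊆ range (b + 1) := Finset.range_subset_range.mpr (by omega)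
  have hz2 : ∀ x ∈ range (b + 1), x ∉ range (min a b + 1) →
      t ^ (x * (x + C)) * Q a x * Q (b + C) (x + C) = 0 := by
    intro x hx1 hx2
    have hax : a < x := by
      have := mem_range.mp hx1
      by_contra h
      exact hx2 (mem_range.mpr (by omega))
    rw [Q_eq_zero_of_lt hax]
    ring
  rw [← Finset.sum_subset hsub2 hz2] at hV
  have key := congrArg (· * ((al a)⁻¹ * (al (b + C))⁻¹)) hV
  simp only [Finset.sum_mul] at key
  calc al (a + b + C) * ial (a : ℤ) * ial (b : ℤ) * ial ((a + C : ℕ) : ℤ) * ial ((b + C : ℕ) : ℤ)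
      = Q (a + b + C) b * ((al a)⁻¹ * (al (b + C))⁻¹) := by
        unfold Q
        rw [ial_eq_inv_al (a + C) (show ((a + b + C : ℕ) : ℤ) - (b : ℕ) = ((a + C : ℕ) : ℤ) by
          push_cast; ring)]
        rw [ial_natCast, ial_natCast, ial_natCast, ial_natCast]
        ring
    _ = ∑ l ∈ range (min a b + 1), t ^ (l * (l + C)) * ial (l : ℤ) * ial ((l + C : ℕ) : ℤ)
          * ial ((a : ℤ) - l) * ial ((b : ℤ) - l) := by
        rw [key]
        refine Finset.sum_congr rfl fun l hl => ?_
        have hla : l ≤ a := by have := mem_range.mp hl; omega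
        unfold Q
        rw [show ((b + C : ℕ) : ℤ) - ((l + C : ℕ) : ℤ) = (b : ℤ) - l by push_cast; ring]
        have ha := al_ne_zero a
        have hb := al_ne_zero (b + C)
        field_simp

lemma STAR (a b p q s : ℕ) (B : ℤ) (hp : (p : ℤ) = a - B) (hq : (q : ℤ) = b - B)
    (hs : (s : ℤ) = a + b - B) (N : ℕ) (hN : min a b < N) :
    al s * ial (a : ℤ) * ial (b : ℤ) * ial (p : ℤ) * ial (q : ℤ)
      = ∑ l ∈ range N, t ^ ((l : ℤ) * (l - B)) * ial (l : ℤ) * ial ((l : ℤ) - B)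
          * ial ((a : ℤ) - l) * ial ((b : ℤ) - l) := by
  rcases le_or_gt B 0 with hB | hB
  · set C : ℕ := (-B).toNat with hC
    have hBC : B = -(C : ℤ) := by omega
    have hpa : p = a + C := by omega
    have hqb : q = b + C := by omega
    have hsab : s = a + b + C := by omega
    subst hpa hqb hsab
    have := VDMinv a b C N hN
    rw [show al (a + b + C) * ial (a : ℤ) * ial (b : ℤ) * ial ((a + C : ℕ) : ℤ)
        * ial ((b + C : ℕ) : ℤ) = al (a + b + C) * ial (a : ℤ) * ial (b : ℤ)
        * ial ((a + C : ℕ) : ℤ) * ial ((b + C : ℕ) : ℤ) from rfl] at this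
    rw [this]
    refine Finset.sum_congr rfl fun l _ => ?_
    rw [show (l : ℤ) * ((l : ℤ) - B) = ((l * (l + C) : ℕ) : ℤ) by rw [hBC]; push_cast; ring,
      zpow_natCast, show (l : ℤ) - B = ((l + C : ℕ) : ℤ) by rw [hBC]; push_cast; ring]
  · set D : ℕ := B.toNat with hD
    have hBD : B = (D : ℤ) := by omega
    have hap : a = p + D := by omega
    have hbq : b = q + D := by omega
    have hspq : s = p + q + D := by omega
    have hmin : min p q < N - D := by omega
    have hV := VDMinv p q D (N - D) hmin
    have hIco : ∀ x ∈ range N, x ∉ Finset.Ico D N →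
        t ^ ((x : ℤ) * (x - B)) * ial (x : ℤ) * ial ((x : ℤ) - B)
          * ial ((a : ℤ) - x) * ial ((b : ℤ) - x) = 0 := by
      intro x hx1 hx2
      have hxD : x < D := by
        have := mem_range.mp hx1
        by_contra h
        exact hx2 (Finset.mem_Ico.mpr (by omega))
      rw [ial_neg (show (x : ℤ) - B < 0 by omega)]
      ring
    have hsubI : Finset.Ico D N ⊆ range N := by
      rw [Finset.range_eq_Ico]
      exact Finset.Ico_subset_Ico (Nat.zero_le D) le_rfl
    rw [← Finset.sum_subset hsubI hIco, Finset.sum_Ico_eq_sum_range]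
    calc al s * ial (a : ℤ) * ial (b : ℤ) * ial (p : ℤ) * ial (q : ℤ)
        = al (p + q + D) * ial (p : ℤ) * ial (q : ℤ) * ial ((p + D : ℕ) : ℤ)
            * ial ((q + D : ℕ) : ℤ) := by
          rw [hspq, show (a : ℕ) = p + D from hap, show (b : ℕ) = q + D from hbq]
          ring
      _ = ∑ l ∈ range (N - D), t ^ (l * (l + D)) * ial (l : ℤ) * ial ((l + D : ℕ) : ℤ)
            * ial ((p : ℤ) - l) * ial ((q : ℤ) - l) := hV
      _ = ∑ l ∈ range (N - D), t ^ (((D + l : ℕ) : ℤ) * ((D + l : ℕ) - B)) * ial ((D + l : ℕ) : ℤ)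
            * ial (((D + l : ℕ) : ℤ) - B) * ial ((a : ℤ) - (D + l : ℕ)) * ial ((b : ℤ) - (D + l : ℕ)) := by
          refine Finset.sum_congr rfl fun l _ => ?_
          rw [show ((D + l : ℕ) : ℤ) * (((D + l : ℕ) : ℤ) - B) = ((l * (l + D) : ℕ) : ℤ) by
              rw [hBD]; push_cast; ring,
            zpow_natCast,
            show ((D + l : ℕ) : ℤ) - B = ((l : ℕ) : ℤ) by rw [hBD]; push_cast; ring,
            show (a : ℤ) - ((D + l : ℕ) : ℤ) = (p : ℤ) - l by
              rw [show (a : ℕ) = p + D from hap]; push_cast; ring,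
            show (b : ℤ) - ((D + l : ℕ) : ℤ) = (q : ℤ) - l by
              rw [show (b : ℕ) = q + D from hbq]; push_cast; ring,
            show ((D + l : ℕ) : ℤ) = ((l + D : ℕ) : ℤ) by push_cast; ring]
          ring

lemma poch_neg (m : ℕ) : ∀ n : ℕ, n ≤ m → poch (t ^ (-(m : ℤ))) n
    = (-1 : RatFunc ℚ) ^ n * t ^ ((cc n : ℤ) - n * m) * al m * ial ((m : ℤ) - n) := by
  intro n
  induction n with
  | zero =>
    intro _
    rw [show ((m : ℤ) - (0 : ℕ)) = ((m : ℕ) : ℤ) by push_cast; ring, ial_natCast]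
    simp only [poch, Finset.range_zero, Finset.prod_empty, pow_zero, Nat.cast_zero, cc,
      Nat.cast_ofNat, zero_mul, sub_zero, zpow_zero]
    rw [one_mul, one_mul, mul_inv_cancel₀ (al_ne_zero m)]
  | succ n ih =>
    intro hnm
    have hn : n ≤ m := by omega
    rw [poch_succ, ih hn]
    have hfac : 1 - t ^ (-(m : ℤ)) * t ^ n = -(t ^ ((n : ℤ) - m)) * (1 - t ^ ((m - n : ℕ))) := by
      have e1 : t ^ (-(m : ℤ)) * t ^ n = t ^ ((n : ℤ) - m) := by
        rw [show (t : RatFunc ℚ) ^ n = t ^ ((n : ℕ) : ℤ) from (zpow_natCast t n).symm,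
          ← zpow_add₀ t_ne_zero]
        congr 1
        ring
      have e2 : t ^ ((n : ℤ) - m) * t ^ (((m - n : ℕ)) : ℤ) = 1 := by
        rw [← zpow_add₀ t_ne_zero, show (n : ℤ) - m + ((m - n : ℕ) : ℤ) = 0 by push_cast; omega,
          zpow_zero]
      rw [show (t : RatFunc ℚ) ^ ((m - n : ℕ)) = t ^ (((m - n : ℕ)) : ℤ) from
        (zpow_natCast t _).symm]
      linear_combination -e1 - e2
    rw [hfac]
    have hial : ial ((m : ℤ) - n) * (1 - t ^ ((m - n : ℕ))) = ial ((m : ℤ) - (n + 1 : ℕ)) := by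
      rw [ial_sub_natCast m n hn, ial_sub_natCast m (n + 1) hnm]
      have : al (m - n) = al (m - (n + 1)) * (1 - t ^ (m - n)) := by
        rw [show m - n = (m - (n + 1)) + 1 by omega, al_succ, show m - (n + 1) + 1 = m - n by omega]
      rw [this, mul_inv]
      have h2 : ((1 : RatFunc ℚ) - t ^ (m - n)) ≠ 0 := one_sub_t_pow_ne_zero _ (by omega)
      rw [mul_assoc, inv_mul_cancel₀ h2, mul_one]
    have hpow : t ^ ((cc n : ℤ) - n * m) * t ^ ((n : ℤ) - m)
        = t ^ ((cc (n + 1) : ℤ) - (n + 1 : ℕ) * m) := by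
      rw [← zpow_add₀ t_ne_zero]
      congr 1
      have : cc (n + 1) = cc n + n := rfl
      push_cast [this]
      ring
    calc (-1 : RatFunc ℚ) ^ n * t ^ ((cc n : ℤ) - n * m) * al m * ial ((m : ℤ) - n) *
          (-(t ^ ((n : ℤ) - m)) * (1 - t ^ ((m - n : ℕ))))
        = ((-1 : RatFunc ℚ) ^ n * -1) * (t ^ ((cc n : ℤ) - n * m) * t ^ ((n : ℤ) - m)) * al m *
            (ial ((m : ℤ) - n) * (1 - t ^ ((m - n : ℕ)))) := by ring
      _ = (-1 : RatFunc ℚ) ^ (n + 1) * t ^ ((cc (n + 1) : ℤ) - (n + 1 : ℕ) * m) * al m *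
            ial ((m : ℤ) - (n + 1 : ℕ)) := by
          rw [hial, hpow, pow_succ]

lemma al_split (d : ℕ) : ∀ k : ℕ, al (d + k) = al d * ∏ r ∈ range k, (1 - t ^ (d + 1 + r)) := by
  intro k
  induction k with
  | zero => simp
  | succ k ih =>
    rw [show d + (k + 1) = (d + k) + 1 by ring, al_succ, ih, Finset.prod_range_succ,
      show d + 1 + k = d + k + 1 by ring]
    ring

lemma poch_high (M k : ℕ) : poch (t ^ ((M : ℤ) - k + 1)) k = al M * ial ((M : ℤ) - k) := by
  rcases le_or_gt k M with h | h
  · obtain ⟨d, rfl⟩ : ∃ d, M = d + k := ⟨M - k, by omega⟩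
    rw [ial_sub_natCast (d + k) k (by omega), show d + k - k = d by omega]
    rw [al_split d k]
    have : poch (t ^ (((d + k : ℕ) : ℤ) - k + 1)) k = ∏ r ∈ range k, (1 - t ^ (d + 1 + r)) := by
      unfold poch
      refine Finset.prod_congr rfl fun r _ => ?_
      rw [show (t : RatFunc ℚ) ^ r = t ^ ((r : ℕ) : ℤ) from (zpow_natCast t r).symm,
        ← zpow_add₀ t_ne_zero,
        show (((d + k : ℕ) : ℤ) - k + 1 + r) = ((d + 1 + r : ℕ) : ℤ) by push_cast; ring,
        zpow_natCast]
    rw [this]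
    field_simp [al_ne_zero d]
  · rw [ial_neg (show (M : ℤ) - k < 0 by omega), mul_zero]
    refine Finset.prod_eq_zero (Finset.mem_range.mpr (show k - 1 - M < k by omega)) ?_
    rw [show (t : RatFunc ℚ) ^ (k - 1 - M) = t ^ ((k - 1 - M : ℕ) : ℤ) from
      (zpow_natCast t _).symm, ← zpow_add₀ t_ne_zero,
      show ((M : ℤ) - k + 1 + ((k - 1 - M : ℕ) : ℤ)) = 0 by push_cast; omega, zpow_zero]
    ring

noncomputable def symS (i i' i'' : ℕ) (A : ℤ) : RatFunc ℚ :=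
  ∑ k ∈ range (i + i' + i'' + 1), t ^ ((k : ℤ) * (k - A)) * ial (k : ℤ) * ial ((k : ℤ) - A)
    * ial ((i : ℤ) - k) * ial ((i' : ℤ) - k) * ial ((i'' : ℤ) - k)

lemma symS_swap₁ (a b c : ℕ) (A : ℤ) : symS a b c A = symS b a c A := by
  unfold symS
  rw [show b + a + c = a + b + c by ring]
  exact Finset.sum_congr rfl fun k _ => by ring

lemma symS_swap₂ (a b c : ℕ) (A : ℤ) : symS a b c A = symS a c b A := by
  unfold symS
  rw [show a + c + b = a + b + c by ring]
  exact Finset.sum_congr rfl fun k _ => by ring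

/-- The normalized fugacity
`u(j,i,j',i',j'',i'') = (α_{i+j}/(α_i α_{i'} α_{i''} α_j α_{j''})) ·
  ∑_{n=0}^{min(i,i')} (t^{-i};t)_n (t^{-i'};t)_n / ((t;t)_n (t^{-(i+j)};t)_n) · t^{n(i''+1)}`. -/
noncomputable def u (j i j' i' j'' i'' : ℕ) : RatFunc ℚ :=
  al (i + j) / (al i * al i' * al i'' * al j * al j'') *
    ∑ n ∈ Finset.range (min i i' + 1),
      poch (t ^ (-(i : ℤ))) n * poch (t ^ (-(i' : ℤ))) n /
          (poch t n * poch (t ^ (-((i : ℤ) + (j : ℤ)))) n) *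
        t ^ (n * (i'' + 1))

lemma alg_helper (ai ai' ai'' aj aj'' an aij aijn T1 T2 T3 T4 I1 I2 s : RatFunc ℚ)
    (hai : ai ≠ 0) (hai' : ai' ≠ 0) (hai'' : ai'' ≠ 0) (haj : aj ≠ 0) (haj'' : aj'' ≠ 0)
    (han : an ≠ 0) (haij : aij ≠ 0) (haijn : aijn ≠ 0) (hT3 : T3 ≠ 0) (hs : s ≠ 0) :
    aij / (ai * ai' * ai'' * aj * aj'') *
        (s * T1 * ai * I1 * (s * T2 * ai' * I2) / (an * (s * T3 * aij * aijn⁻¹)) * T4)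
      = s * (T1 * T2 * T4 / T3) * (aijn * I1 * I2 * aj⁻¹ * aj''⁻¹) * (an⁻¹ * ai''⁻¹) := by
  calc aij / (ai * ai' * ai'' * aj * aj'') *
        (s * T1 * ai * I1 * (s * T2 * ai' * I2) / (an * (s * T3 * aij * aijn⁻¹)) * T4)
      = (aij * aij⁻¹) * (ai * ai⁻¹) * (ai' * ai'⁻¹) * (s * s⁻¹) *
          (s * (T1 * T2 * T4 / T3) * (aijn * I1 * I2 * aj⁻¹ * aj''⁻¹) * (an⁻¹ * ai''⁻¹)) := by
        simp only [div_eq_mul_inv, mul_inv, inv_inv]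
        ring
    _ = s * (T1 * T2 * T4 / T3) * (aijn * I1 * I2 * aj⁻¹ * aj''⁻¹) * (an⁻¹ * ai''⁻¹) := by
        rw [mul_inv_cancel₀ haij, mul_inv_cancel₀ hai, mul_inv_cancel₀ hai', mul_inv_cancel₀ hs]
        ring

lemma T1 (j i j' i' j'' i'' : ℕ) :
    u j i j' i' j'' i'' = ∑ n ∈ range (min i i' + 1),
      (-1 : RatFunc ℚ) ^ n * t ^ ((cc n : ℤ) + n * ((i'' : ℤ) - ((i' : ℤ) - j) + 1)) *
        (al (i + j - n) * ial ((i : ℤ) - n) * ial ((i' : ℤ) - n) * ial (j : ℤ) * ial (j'' : ℤ)) *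
        (ial (n : ℤ) * ial (i'' : ℤ)) := by
  unfold u
  rw [Finset.mul_sum]
  refine Finset.sum_congr rfl fun n hn => ?_
  have hni : n ≤ i := by have := mem_range.mp hn; omega
  have hni' : n ≤ i' := by have := mem_range.mp hn; omega
  have hnij : n ≤ i + j := by omega
  rw [poch_t, poch_neg i n hni, poch_neg i' n hni',
    show -((i : ℤ) + (j : ℤ)) = -(((i + j : ℕ)) : ℤ) by push_cast; ring,
    poch_neg (i + j) n hnij, ial_sub_natCast (i + j) n hnij,
    ial_natCast j, ial_natCast j'', ial_natCast n, ial_natCast i'',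
    show (t : RatFunc ℚ) ^ (n * (i'' + 1)) = t ^ ((n * (i'' + 1) : ℕ) : ℤ) from
      (zpow_natCast t _).symm]
  rw [show t ^ ((cc n : ℤ) + (n : ℤ) * ((i'' : ℤ) - ((i' : ℤ) - j) + 1))
      = t ^ ((cc n : ℤ) - n * i) * t ^ ((cc n : ℤ) - n * i') * t ^ ((n * (i'' + 1) : ℕ) : ℤ)
        / t ^ ((cc n : ℤ) - n * ((i + j : ℕ) : ℤ)) by
    rw [← zpow_add₀ t_ne_zero, ← zpow_add₀ t_ne_zero, ← zpow_sub₀ t_ne_zero]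
    congr 1
    push_cast
    ring]
  exact alg_helper (al i) (al i') (al i'') (al j) (al j'') (al n) (al (i + j)) (al (i + j - n))
    (t ^ ((cc n : ℤ) - n * i)) (t ^ ((cc n : ℤ) - n * i'))
    (t ^ ((cc n : ℤ) - n * ((i + j : ℕ) : ℤ))) (t ^ ((n * (i'' + 1) : ℕ) : ℤ))
    (ial ((i : ℤ) - n)) (ial ((i' : ℤ) - n)) ((-1 : RatFunc ℚ) ^ n)
    (al_ne_zero i) (al_ne_zero i') (al_ne_zero i'') (al_ne_zero j) (al_ne_zero j'')
    (al_ne_zero n) (al_ne_zero (i + j)) (al_ne_zero (i + j - n))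
    (zpow_ne_zero _ t_ne_zero) (pow_ne_zero _ (by norm_num))

lemma u_eq_symS (j i j' i' j'' i'' : ℕ)
    (h1 : (i' : ℤ) - j = (i'' : ℤ) - j') (h2 : (i'' : ℤ) - j' = (i : ℤ) - j'') :
    u j i j' i' j'' i'' = symS i i' i'' ((i' : ℤ) - j) := by
  set N := i + i' + i'' + 1 with hNdef
  set G : ℕ → ℕ → RatFunc ℚ := fun n l =>
    (-1 : RatFunc ℚ) ^ n *
      t ^ ((cc n : ℤ) + n * ((i'' : ℤ) - ((i' : ℤ) - j) + 1) +
        (l : ℤ) * ((l : ℤ) - (((i' : ℤ) - j) - n))) *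
      (ial (n : ℤ) * ial (i'' : ℤ)) *
      (ial (l : ℤ) * ial ((l : ℤ) - (((i' : ℤ) - j) - n)) * ial ((i : ℤ) - n - l) *
        ial ((i' : ℤ) - n - l)) with hG
  have hGzero : ∀ n l : ℕ, i < n + l ∨ i' < n + l → G n l = 0 := by
    intro n l hnl
    rcases hnl with h | h
    · show (-1 : RatFunc ℚ) ^ n * _ * _ * (_ * _ * ial ((i : ℤ) - n - l) * _) = 0
      rw [ial_neg (show (i : ℤ) - n - l < 0 by omega)]
      ring
    · show (-1 : RatFunc ℚ) ^ n * _ * _ * (_ * _ * _ * ial ((i' : ℤ) - n - l)) = 0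
      rw [ial_neg (show (i' : ℤ) - n - l < 0 by omega)]
      ring
  have step2 : u j i j' i' j'' i'' = ∑ n ∈ range (min i i' + 1), ∑ l ∈ range N, G n l := by
    rw [T1 j i j' i' j'' i'']
    refine Finset.sum_congr rfl fun n hn => ?_
    have hni : n ≤ i := by have := mem_range.mp hn; omega
    have hni' : n ≤ i' := by have := mem_range.mp hn; omega
    have hp : (j'' : ℤ) = ((i - n : ℕ) : ℤ) - (((i' : ℤ) - j) - n) := by
      rw [Nat.cast_sub hni]; omega
    have hq : (j : ℤ) = ((i' - n : ℕ) : ℤ) - (((i' : ℤ) - j) - n) := by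
      rw [Nat.cast_sub hni']; omega
    have hs : ((i + j - n : ℕ) : ℤ)
        = ((i - n : ℕ) : ℤ) + ((i' - n : ℕ) : ℤ) - (((i' : ℤ) - j) - n) := by
      rw [Nat.cast_sub hni, Nat.cast_sub hni', Nat.cast_sub (by omega : n ≤ i + j)]
      push_cast
      ring
    have hN' : min (i - n) (i' - n) < N := by omega
    have hstar := STAR (i - n) (i' - n) j'' j (i + j - n) (((i' : ℤ) - j) - n) hp hq hs N hN'
    rw [Nat.cast_sub hni, Nat.cast_sub hni'] at hstar
    calc (-1 : RatFunc ℚ) ^ n * t ^ ((cc n : ℤ) + n * ((i'' : ℤ) - ((i' : ℤ) - j) + 1)) *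
          (al (i + j - n) * ial ((i : ℤ) - n) * ial ((i' : ℤ) - n) * ial (j : ℤ) * ial (j'' : ℤ)) *
          (ial (n : ℤ) * ial (i'' : ℤ))
        = (al (i + j - n) * ial ((i : ℤ) - n) * ial ((i' : ℤ) - n) * ial (j'' : ℤ) * ial (j : ℤ)) *
            ((-1 : RatFunc ℚ) ^ n * t ^ ((cc n : ℤ) + n * ((i'' : ℤ) - ((i' : ℤ) - j) + 1)) *
              (ial (n : ℤ) * ial (i'' : ℤ))) := by ring
      _ = (∑ l ∈ range N, t ^ ((l : ℤ) * ((l : ℤ) - (((i' : ℤ) - j) - n))) * ial (l : ℤ) *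
            ial ((l : ℤ) - (((i' : ℤ) - j) - n)) * ial ((i : ℤ) - n - l) * ial ((i' : ℤ) - n - l)) *
            ((-1 : RatFunc ℚ) ^ n * t ^ ((cc n : ℤ) + n * ((i'' : ℤ) - ((i' : ℤ) - j) + 1)) *
              (ial (n : ℤ) * ial (i'' : ℤ))) := by rw [hstar]
      _ = ∑ l ∈ range N, G n l := by
          rw [Finset.sum_mul]
          refine Finset.sum_congr rfl fun l _ => ?_
          show _ = (-1 : RatFunc ℚ) ^ n * _ * _ * _
          rw [show t ^ ((cc n : ℤ) + n * ((i'' : ℤ) - ((i' : ℤ) - j) + 1) +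
              (l : ℤ) * ((l : ℤ) - (((i' : ℤ) - j) - n)))
              = t ^ ((l : ℤ) * ((l : ℤ) - (((i' : ℤ) - j) - n))) *
                t ^ ((cc n : ℤ) + n * ((i'' : ℤ) - ((i' : ℤ) - j) + 1)) by
            rw [← zpow_add₀ t_ne_zero]; congr 1; ring]
          ring
  have step3 : ∑ n ∈ range (min i i' + 1), ∑ l ∈ range N, G n l
      = ∑ n ∈ range N, ∑ l ∈ range N, G n l := by
    refine Finset.sum_subset (Finset.range_subset_range.mpr (by omega)) fun n hn hn' => ?_
    refine Finset.sum_eq_zero fun l _ => ?_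
    have hmin : min i i' < n := by
      by_contra h
      exact hn' (mem_range.mpr (by omega))
    exact hGzero n l (by omega)
  have step4 : ∑ n ∈ range N, ∑ l ∈ range N, G n l
      = ∑ k ∈ range N, ∑ n ∈ range (k + 1), G n (k - n) := by
    rw [Finset.sum_range_diag_flip N G]
    refine Finset.sum_congr rfl fun n hn => ?_
    refine (Finset.sum_subset (Finset.range_subset_range.mpr (by omega)) fun l hl hl' => ?_).symm
    have : N - n ≤ l := by
      by_contra h
      exact hl' (mem_range.mpr (by omega))
    have hnN : n < N := mem_range.mp hn
    exact hGzero n l (by omega)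
  have step5 : ∀ k ∈ range N, ∑ n ∈ range (k + 1), G n (k - n)
      = t ^ ((k : ℤ) * ((k : ℤ) - ((i' : ℤ) - j))) * ial (k : ℤ) *
          ial ((k : ℤ) - ((i' : ℤ) - j)) * ial ((i : ℤ) - k) * ial ((i' : ℤ) - k) *
          ial ((i'' : ℤ) - k) := by
    intro k _
    have hinner : ∀ n ∈ range (k + 1), G n (k - n)
        = (t ^ ((k : ℤ) * ((k : ℤ) - ((i' : ℤ) - j))) * ial ((k : ℤ) - ((i' : ℤ) - j)) *
            ial ((i : ℤ) - k) * ial ((i' : ℤ) - k) * ial (i'' : ℤ)) *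
          ((-1 : RatFunc ℚ) ^ n * t ^ ((cc n : ℤ) + n * ((i'' : ℤ) - k + 1)) *
            (ial (n : ℤ) * ial ((k : ℤ) - n))) := by
      intro n hn
      have hnk : n ≤ k := by have := mem_range.mp hn; omega
      show (-1 : RatFunc ℚ) ^ n * _ * _ * _ = _
      rw [Nat.cast_sub hnk]
      rw [show (cc n : ℤ) + n * ((i'' : ℤ) - ((i' : ℤ) - j) + 1) +
            ((k : ℤ) - n) * (((k : ℤ) - n) - (((i' : ℤ) - j) - n))
            = ((k : ℤ) * ((k : ℤ) - ((i' : ℤ) - j))) + ((cc n : ℤ) + n * ((i'' : ℤ) - k + 1)) by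
          ring,
        zpow_add₀ t_ne_zero,
        show (i : ℤ) - n - ((k : ℤ) - n) = (i : ℤ) - k by ring,
        show (i' : ℤ) - n - ((k : ℤ) - n) = (i' : ℤ) - k by ring,
        show (k : ℤ) - n - (((i' : ℤ) - j) - n) = (k : ℤ) - ((i' : ℤ) - j) by ring]
      ring
    rw [Finset.sum_congr rfl hinner, ← Finset.mul_sum]
    have hQQ : ∑ n ∈ range (k + 1), (-1 : RatFunc ℚ) ^ n *
        t ^ ((cc n : ℤ) + n * ((i'' : ℤ) - k + 1)) * (ial (n : ℤ) * ial ((k : ℤ) - n))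
        = ial (k : ℤ) * (al i'' * ial ((i'' : ℤ) - k)) := by
      rw [← poch_high i'' k, QBT (t ^ ((i'' : ℤ) - k + 1)) k, Finset.mul_sum]
      refine Finset.sum_congr rfl fun n _ => ?_
      rw [show (t ^ ((i'' : ℤ) - k + 1)) ^ n = t ^ (((i'' : ℤ) - k + 1) * n) by
          rw [← zpow_natCast (t ^ ((i'' : ℤ) - k + 1)) n, ← zpow_mul],
        show (t : RatFunc ℚ) ^ (cc n) = t ^ ((cc n : ℕ) : ℤ) from (zpow_natCast t _).symm,
        show t ^ ((cc n : ℤ) + n * ((i'' : ℤ) - k + 1))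
          = t ^ ((cc n : ℕ) : ℤ) * t ^ (((i'' : ℤ) - k + 1) * n) by
          rw [← zpow_add₀ t_ne_zero]; congr 1; ring]
      unfold Q
      have := al_mul_ial k
      calc (-1 : RatFunc ℚ) ^ n * (t ^ ((cc n : ℕ) : ℤ) * t ^ (((i'' : ℤ) - k + 1) * n)) *
            (ial (n : ℤ) * ial ((k : ℤ) - n))
          = (al k * ial (k : ℤ)) * ((-1 : RatFunc ℚ) ^ n * t ^ ((cc n : ℕ) : ℤ) *
              (ial (n : ℤ) * ial ((k : ℤ) - n)) * t ^ (((i'' : ℤ) - k + 1) * n)) := by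
            rw [al_mul_ial k]; ring
        _ = ial (k : ℤ) * ((-1) ^ n * t ^ ((cc n : ℕ) : ℤ) * (al k * ial (n : ℤ) *
              ial ((k : ℤ) - n)) * t ^ (((i'' : ℤ) - k + 1) * n)) := by ring
    rw [hQQ]
    calc (t ^ ((k : ℤ) * ((k : ℤ) - ((i' : ℤ) - j))) * ial ((k : ℤ) - ((i' : ℤ) - j)) *
          ial ((i : ℤ) - k) * ial ((i' : ℤ) - k) * ial (i'' : ℤ)) *
          (ial (k : ℤ) * (al i'' * ial ((i'' : ℤ) - k)))
        = (al i'' * ial (i'' : ℤ)) * (t ^ ((k : ℤ) * ((k : ℤ) - ((i' : ℤ) - j))) * ial (k : ℤ) *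
            ial ((k : ℤ) - ((i' : ℤ) - j)) * ial ((i : ℤ) - k) * ial ((i' : ℤ) - k) *
            ial ((i'' : ℤ) - k)) := by ring
      _ = _ := by rw [al_mul_ial i'']; ring
  rw [step2, step3, step4, Finset.sum_congr rfl step5]
  rfl

/-- `u` is invariant under the natural `D₆` action on its six arguments, i.e. under the
cyclic shift `(j,i,j',i',j'',i'') ↦ (j',i',j'',i'',j,i)` and the reflection
`(j,i,j',i',j'',i'') ↦ (j'',i',j',i,j,i'')`. -/
theorem u_dihedral (j i j' i' j'' i'' : ℕ)
    (h1 : (i' : ℤ) - j = (i'' : ℤ) - j') (h2 : (i'' : ℤ) - j' = (i : ℤ) - j'') :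
    u j i j' i' j'' i'' = u j' i' j'' i'' j i ∧
      u j i j' i' j'' i'' = u j'' i' j' i j i'' := by
  have h3 : (i' : ℤ) - j = (i : ℤ) - j'' := h1.trans h2
  constructor
  · rw [u_eq_symS j i j' i' j'' i'' h1 h2, u_eq_symS j' i' j'' i'' j i h2 h3.symm, ← h1,
      show symS i' i'' i ((i' : ℤ) - j) = symS i i' i'' ((i' : ℤ) - j) by
        rw [symS_swap₂ i' i'' i, symS_swap₁ i' i i'']]
  · rw [u_eq_symS j i j' i' j'' i'' h1 h2, u_eq_symS j'' i' j' i j i'' h2.symm h1.symm, ← h3,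
      show symS i' i i'' ((i' : ℤ) - j) = symS i i' i'' ((i' : ℤ) - j) from
        symS_swap₁ i' i i'' ((i' : ℤ) - j)]
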